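/- For all real numbers x and α with α > 0 and -α < x ≤ 0, the inequality ((α - x) α⁵) / (2(α² + x²)³) ≤ 2^(-1/2) holds, and hence ((α - x)(x + α)³ α²) / (2(α² + x²)³) < 1. -/
import Mathlib


/-- Case `-α < x ≤ 0` of the key algebraic inequality in the `X`-multiplier
construction. -/
theorem X_multiplier_ineq_neg (x α : ℝ) (hα : 0 < α) (hx1 : -α < x) (hx2 : x ≤ 0) :
    ((α - x) * α ^ 5) / (2 * (α ^ 2 + x ^ 2) ^ 3) ≤ (2 : ℝ) ^ (-(1 / 2 : ℝ)) ∧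
    ((α - x) * (x + α) ^ 3 * α ^ 2) / (2 * (α ^ 2 + x ^ 2) ^ 3) < 1 := by
  have hden : (0:ℝ) < α ^ 2 + x ^ 2 := by positivity
  have hden3 : (0:ℝ) < 2 * (α ^ 2 + x ^ 2) ^ 3 := by positivity
  constructor
  · have h2 : (2:ℝ) ^ (-(1 / 2 : ℝ)) = (Real.sqrt 2)⁻¹ := by
      rw [Real.rpow_neg (by norm_num), ← Real.sqrt_eq_rpow]
    rw [h2, div_le_iff₀ hden3]
    set s := Real.sqrt (α ^ 2 + x ^ 2) with hs
    have hs2 : s ^ 2 = α ^ 2 + x ^ 2 := Real.sq_sqrt hden.le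
    have hsα : α ≤ s := by
      rw [hs]
      have := Real.sqrt_le_sqrt (show α ^ 2 ≤ α ^ 2 + x ^ 2 by nlinarith)
      rwa [Real.sqrt_sq hα.le] at this
    have hspos : 0 < s := lt_of_lt_of_le hα hsα
    have ht2 : Real.sqrt 2 ^ 2 = 2 := Real.sq_sqrt (by norm_num)
    have htpos : (0:ℝ) < Real.sqrt 2 := Real.sqrt_pos.mpr (by norm_num)
    have hkey : α - x ≤ Real.sqrt 2 * s := by
      have h1 : (α - x) ^ 2 ≤ (Real.sqrt 2 * s) ^ 2 := by
        rw [mul_pow, ht2, hs2]; nlinarith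
      have h2' : 0 ≤ Real.sqrt 2 * s := by positivity
      nlinarith
    have hα5 : α ^ 5 ≤ s ^ 5 := pow_le_pow_left₀ hα.le hsα 5
    have hαx : 0 ≤ α - x := by linarith
    calc (α - x) * α ^ 5 ≤ (Real.sqrt 2 * s) * s ^ 5 := by
          apply mul_le_mul hkey hα5 (by positivity) (by positivity)
      _ = Real.sqrt 2 * (s ^ 2) ^ 3 := by ring
      _ = Real.sqrt 2 * (α ^ 2 + x ^ 2) ^ 3 := by rw [hs2]
      _ ≤ (Real.sqrt 2)⁻¹ * (2 * (α ^ 2 + x ^ 2) ^ 3) := by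
          rw [← mul_assoc]
          apply mul_le_mul_of_nonneg_right _ (by positivity)
          rw [inv_mul_eq_div, le_div_iff₀ htpos]
          nlinarith
  · rw [div_lt_one hden3]
    have h1 : 0 < x + α := by linarith
    have h2 : (α - x) * (x + α) ≤ α ^ 2 + x ^ 2 := by nlinarith
    have h3 : (x + α) ^ 2 * α ^ 2 ≤ (α ^ 2 + x ^ 2) ^ 2 := by nlinarith [sq_nonneg x, sq_nonneg (x*α), mul_nonneg (mul_nonneg h1.le h1.le) (sq_nonneg x)]
    have h4 := mul_le_mul h2 h3 (by positivity) hden.le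
    nlinarith [h4]
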